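/- A ring R is a CUNC ring (i.e., every clean element of R is uniquely nil-clean) if and only if R is an abelian CSNC ring, i.e., every idempotent of R is central and every clean element of R is strongly nil-clean. -/

import Mathlib

/-- An element `a` of a ring is *clean* if `a = e + u` for some idempotent `e` and unit `u`. -/
def IsCleanElem {R : Type*} [Ring R] (a : R) : Prop :=
  ∃ e u : R, IsIdempotentElem e ∧ IsUnit u ∧ a = e + u

/-- An element `a` of a ring is *strongly nil-clean* if `a = e + q` for some idempotent `e`
and nilpotent `q` with `e * q = q * e`. -/
def IsStronglyNilCleanElem {R : Type*} [Ring R] (a : R) : Prop :=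
  ∃ e q : R, IsIdempotentElem e ∧ IsNilpotent q ∧ e * q = q * e ∧ a = e + q

/-- A ring is a *CSNC ring* if every clean element is strongly nil-clean. -/
def IsCSNCRing (R : Type*) [Ring R] : Prop :=
  ∀ a : R, IsCleanElem a → IsStronglyNilCleanElem a

/-- An element `a` of a ring is *uniquely nil-clean* if there is a unique idempotent `e`
with `a - e` nilpotent. -/
def IsUniquelyNilCleanElem {R : Type*} [Ring R] (a : R) : Prop :=
  ∃! e : R, IsIdempotentElem e ∧ IsNilpotent (a - e)

/-- Every idempotent is clean: `e = (1 - e) + (2e - 1)`. -/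
lemma idem_isClean {R : Type*} [Ring R] {e : R} (he : IsIdempotentElem e) :
    IsCleanElem e := by
  refine ⟨1 - e, 2 * e - 1, ?_, ?_, by noncomm_ring⟩
  · show (1 - e) * (1 - e) = 1 - e
    have h : (1 - e) * (1 - e) = 1 - e - e + e * e := by noncomm_ring
    rw [he] at h; rw [h]; noncomm_ring
  · have h : (2 * e - 1) * (2 * e - 1) = 4 * (e * e) - 4 * e + 1 := by noncomm_ring
    rw [he] at h
    have h1 : (2 * e - 1) * (2 * e - 1) = 1 := by rw [h]; noncomm_ring
    exact ⟨⟨2 * e - 1, 2 * e - 1, h1, h1⟩, rfl⟩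

/-- Commuting idempotents whose difference is nilpotent are equal. -/
lemma idem_eq_of_sub_nilpotent {R : Type*} [Ring R] {e f : R}
    (he : IsIdempotentElem e) (hf : IsIdempotentElem f) (hc : e * f = f * e)
    (hn : IsNilpotent (e - f)) : e = f := by
  have he' : e * e = e := he
  have hf' : f * f = f := hf
  have hc' : f * e = e * f := hc.symm
  have heL : ∀ x : R, e * (e * x) = e * x := fun x => by rw [← mul_assoc, he']
  have hfef : f * (e * f) = e * f := by rw [← mul_assoc, hc', mul_assoc, hf']
  -- x := e - e*f is idempotent and nilpotent, hence 0
  have hx : IsIdempotentElem (e - e * f) := by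
    show (e - e * f) * (e - e * f) = e - e * f
    simp only [mul_sub, sub_mul, mul_assoc, he', heL, hc', hfef, sub_self, sub_zero]
  have hxe : e - e * f = e * (e - f) := by rw [mul_sub, he']
  have hxn : IsNilpotent (e - e * f) := by
    rw [hxe]
    exact ((Commute.refl e).sub_right (hc : Commute e f)).isNilpotent_mul_left hn
  have h1 : e = e * f := sub_eq_zero.mp (hx.eq_zero_of_isNilpotent hxn)
  -- y := f - e*f is idempotent and nilpotent, hence 0
  have hy : IsIdempotentElem (f - e * f) := by
    show (f - e * f) * (f - e * f) = f - e * f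
    simp only [mul_sub, sub_mul, mul_assoc, hf', he', heL, hc', hfef, sub_self, sub_zero]
  have hye : f - e * f = f * (f - e) := by rw [mul_sub, hf', hc]
  have hyn : IsNilpotent (f - e * f) := by
    rw [hye]
    have hfe : IsNilpotent (f - e) := by rw [← neg_sub e f]; exact hn.neg
    exact ((Commute.refl f).sub_right (hc' : Commute f e)).isNilpotent_mul_left hfe
  have h2 : f = e * f := sub_eq_zero.mp (hy.eq_zero_of_isNilpotent hyn)
  exact h1.trans h2.symm

theorem stmt_10 (R : Type*) [Ring R] :
    (∀ a : R, IsCleanElem a → IsUniquelyNilCleanElem a) ↔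
      (∀ e : R, IsIdempotentElem e → ∀ r : R, e * r = r * e) ∧ IsCSNCRing R := by
  constructor
  · intro h
    have hab : ∀ e : R, IsIdempotentElem e → ∀ r : R, e * r = r * e := by
      intro e he r
      have he' : e * e = e := he
      have heL : ∀ x : R, e * (e * x) = e * x := fun x => by rw [← mul_assoc, he']
      obtain ⟨g, hg, hguniq⟩ := h e (idem_isClean he)
      have h1 : e = g := hguniq e ⟨he, by simp⟩
      -- first: e * r * e = e * r, via idempotent e + (e*r - e*r*e)
      have key1 : e * r * e = e * r := by
        set t := e * r - e * r * e with ht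
        have het : e * t = t := by
          rw [ht]; simp only [mul_sub, ← mul_assoc, he']
        have hte : t * e = 0 := by
          rw [ht]; simp only [sub_mul, mul_assoc, heL, he', sub_self]
        have htt : t * t = 0 := by
          calc t * t = (t * e) * t := by rw [mul_assoc, het]
          _ = 0 := by rw [hte, zero_mul]
        have hef : IsIdempotentElem (e + t) := by
          show (e + t) * (e + t) = e + t
          simp only [mul_add, add_mul, he', het, hte, htt, add_zero, zero_add]
        have h2 : e + t = g := by
          refine hguniq (e + t) ⟨hef, ⟨2, ?_⟩⟩
          have hd : e - (e + t) = -t := by abel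
          rw [hd, neg_sq, sq, htt]
        have ht0 : t = 0 := left_eq_add.mp (h1.trans h2.symm)
        exact (sub_eq_zero.mp (ht.symm.trans ht0)).symm
      -- second: e * r * e = r * e, via idempotent e + (r*e - e*r*e)
      have key2 : e * r * e = r * e := by
        set t := r * e - e * r * e with ht
        have het : e * t = 0 := by
          rw [ht]; simp only [mul_sub, ← mul_assoc, he', sub_self]
        have hte : t * e = t := by
          rw [ht]; simp only [sub_mul, mul_assoc, he']
        have htt : t * t = 0 := by
          calc t * t = t * (e * t) := by rw [← mul_assoc, hte]
          _ = 0 := by rw [het, mul_zero]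
        have hef : IsIdempotentElem (e + t) := by
          show (e + t) * (e + t) = e + t
          simp only [mul_add, add_mul, he', het, hte, htt, add_zero, zero_add]
        have h2 : e + t = g := by
          refine hguniq (e + t) ⟨hef, ⟨2, ?_⟩⟩
          have hd : e - (e + t) = -t := by abel
          rw [hd, neg_sq, sq, htt]
        have ht0 : t = 0 := left_eq_add.mp (h1.trans h2.symm)
        exact (sub_eq_zero.mp (ht.symm.trans ht0)).symm
      exact key1.symm.trans key2
    refine ⟨hab, ?_⟩
    intro a ha
    obtain ⟨e, ⟨he, hn⟩, -⟩ := h a ha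
    exact ⟨e, a - e, he, hn, hab e he (a - e), by abel⟩
  · rintro ⟨hab, hcsnc⟩ a ha
    obtain ⟨e, q, he, hq, hcomm, rfl⟩ := hcsnc a ha
    refine ⟨e, ⟨he, by simpa using hq⟩, ?_⟩
    rintro f ⟨hf, hfn⟩
    -- e - f is nilpotent: (e + q - f) and q are nilpotent and commute
    have hc1 : Commute (e + q - f) q := by
      show (e + q - f) * q = q * (e + q - f)
      have h2 : f * q = q * f := hab f hf q
      simp only [sub_mul, add_mul, mul_sub, mul_add, hcomm, h2]
    have hef : IsNilpotent (e - f) := by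
      have h3 := hc1.isNilpotent_sub hfn hq
      have h4 : e + q - f - q = e - f := by abel
      rwa [h4] at h3
    have h5 : IsNilpotent (f - e) := by rw [← neg_sub e f]; exact hef.neg
    exact idem_eq_of_sub_nilpotent hf he (hab f hf e) h5
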